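/- Let P be a decomposable linear probability dynamics on S_N with decomposing family {P_{t←t'}}. Then P is divisible (i.e. for each t' ≤ t there is a column-stochastic matrix P(t←t') with P(t) = P(t←t')·P(t')) if and only if every map P_{t←t'} can be extended to a convex-combination-preserving map S_N → S_N. -/

import Mathlib

/-- Column-stochastic real matrix. -/
def ColStochastic {n : ℕ} (M : Matrix (Fin n) (Fin n) ℝ) : Prop :=
  (∀ i j, M i j ∈ Set.Icc (0:ℝ) 1) ∧ ∀ j, ∑ i, M i j = 1

lemma stoch_mulVec_mem {N : ℕ} {M : Matrix (Fin N) (Fin N) ℝ} (hM : ColStochastic M)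
    {p : Fin N → ℝ} (hp : p ∈ stdSimplex ℝ (Fin N)) :
    M.mulVec p ∈ stdSimplex ℝ (Fin N) := by
  constructor
  · intro i
    simp only [Matrix.mulVec, dotProduct]
    exact Finset.sum_nonneg fun j _ => mul_nonneg (hM.1 i j).1 (hp.1 j)
  · simp only [Matrix.mulVec, dotProduct]
    rw [Finset.sum_comm]
    calc ∑ j, ∑ i, M i j * p j = ∑ j, (∑ i, M i j) * p j := by
          simp [Finset.sum_mul]
      _ = ∑ j, p j := by simp [hM.2]
      _ = 1 := hp.2

lemma g_convex_sum {N : ℕ} (g : (Fin N → ℝ) → (Fin N → ℝ))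
    (hg : ∀ p ∈ stdSimplex ℝ (Fin N), ∀ q ∈ stdSimplex ℝ (Fin N),
      ∀ l ∈ Set.Icc (0:ℝ) 1, g (l • p + (1 - l) • q) = l • g p + (1 - l) • g q)
    (s : Finset (Fin N)) (w : Fin N → ℝ) (q : Fin N → (Fin N → ℝ))
    (hw : ∀ i ∈ s, 0 ≤ w i) (hw1 : ∑ i ∈ s, w i = 1)
    (hq : ∀ i ∈ s, q i ∈ stdSimplex ℝ (Fin N)) :
    g (∑ i ∈ s, w i • q i) = ∑ i ∈ s, w i • g (q i) := by
  induction s using Finset.induction_on generalizing w with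
  | empty => simp at hw1
  | insert _ _ ha ih =>
    rename_i a s
    rw [Finset.sum_insert ha] at hw1
    simp only [Finset.sum_insert ha]
    have hwa0 : 0 ≤ w a := hw a (Finset.mem_insert_self a s)
    have hws : ∀ i ∈ s, 0 ≤ w i := fun i hi => hw i (Finset.mem_insert_of_mem hi)
    have hqa : q a ∈ stdSimplex ℝ (Fin N) := hq a (Finset.mem_insert_self a s)
    have hqs : ∀ i ∈ s, q i ∈ stdSimplex ℝ (Fin N) := fun i hi => hq i (Finset.mem_insert_of_mem hi)
    have hsum : ∑ i ∈ s, w i = 1 - w a := by linarith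
    have hwa1 : w a ≤ 1 := by
      have : 0 ≤ ∑ i ∈ s, w i := Finset.sum_nonneg hws
      linarith
    rcases eq_or_lt_of_le hwa1 with h1 | h1
    · have hz : ∀ i ∈ s, w i = 0 := by
        have : ∑ i ∈ s, w i = 0 := by rw [hsum, ← h1]; ring
        exact (Finset.sum_eq_zero_iff_of_nonneg hws).mp this
      have hz1 : ∑ i ∈ s, w i • q i = 0 := Finset.sum_eq_zero fun i hi => by simp [hz i hi]
      have hz2 : ∑ i ∈ s, w i • g (q i) = 0 := Finset.sum_eq_zero fun i hi => by simp [hz i hi]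
      rw [hz1, hz2, add_zero, add_zero, h1, one_smul, one_smul]
    · set c : ℝ := 1 - w a with hc
      have hc0 : 0 < c := by rw [hc]; linarith
      set r : Fin N → ℝ := ∑ i ∈ s, (c⁻¹ * w i) • q i with hr
      have hwsum' : ∑ i ∈ s, c⁻¹ * w i = 1 := by
        rw [← Finset.mul_sum, hsum, inv_mul_cancel₀ hc0.ne']
      have hws' : ∀ i ∈ s, 0 ≤ c⁻¹ * w i := fun i hi =>
        mul_nonneg (inv_nonneg.mpr hc0.le) (hws i hi)
      have hrmem : r ∈ stdSimplex ℝ (Fin N) :=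
        (convex_stdSimplex ℝ (Fin N)).sum_mem hws' hwsum' hqs
      have hgr : g r = ∑ i ∈ s, (c⁻¹ * w i) • g (q i) := ih _ hws' hwsum' hqs
      have key := hg (q a) hqa r hrmem (w a) ⟨hwa0, hwa1⟩
      rw [← hc] at key
      have hcr : c • r = ∑ i ∈ s, w i • q i := by
        rw [hr, Finset.smul_sum]
        refine Finset.sum_congr rfl fun i hi => ?_
        rw [smul_smul, ← mul_assoc, mul_inv_cancel₀ hc0.ne', one_mul]
      have hcg : c • ∑ i ∈ s, (c⁻¹ * w i) • g (q i) = ∑ i ∈ s, w i • g (q i) := by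
        rw [Finset.smul_sum]
        refine Finset.sum_congr rfl fun i hi => ?_
        rw [smul_smul, ← mul_assoc, mul_inv_cancel₀ hc0.ne', one_mul]
      rw [← hcr, key, hgr, hcg]

/-- A decomposable linear probability dynamics is divisible iff each
decomposing map extends to a convex-combination preserving self-map of the simplex. -/
theorem stmt_12 (N : ℕ) (T : Set ℝ) (hT0 : (0:ℝ) ∈ T)
    (Pm : ℝ → Matrix (Fin N) (Fin N) ℝ)
    (hstoch : ∀ t ∈ T, ColStochastic (Pm t))
    (hP0 : ∀ p ∈ stdSimplex ℝ (Fin N), (Pm 0).mulVec p = p)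
    (F : ℝ → ℝ → (Fin N → ℝ) → (Fin N → ℝ))
    (hFmap : ∀ t' ∈ T, ∀ t ∈ T, t' ≤ t →
      ∀ x ∈ (fun p => (Pm t').mulVec p) '' stdSimplex ℝ (Fin N),
        F t t' x ∈ stdSimplex ℝ (Fin N))
    (hFdecomp : ∀ t' ∈ T, ∀ t ∈ T, t' ≤ t →
      ∀ p ∈ stdSimplex ℝ (Fin N), F t t' ((Pm t').mulVec p) = (Pm t).mulVec p) :
    (∀ t' ∈ T, ∀ t ∈ T, t' ≤ t →
      ∃ X : Matrix (Fin N) (Fin N) ℝ, ColStochastic X ∧ Pm t = X * Pm t') ↔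
    (∀ t' ∈ T, ∀ t ∈ T, t' ≤ t →
      ∃ g : (Fin N → ℝ) → (Fin N → ℝ),
        (∀ p ∈ stdSimplex ℝ (Fin N), g p ∈ stdSimplex ℝ (Fin N)) ∧
        (∀ p ∈ stdSimplex ℝ (Fin N), ∀ q ∈ stdSimplex ℝ (Fin N),
          ∀ l ∈ Set.Icc (0:ℝ) 1,
            g (l • p + (1 - l) • q) = l • g p + (1 - l) • g q) ∧
        (∀ x ∈ (fun p => (Pm t').mulVec p) '' stdSimplex ℝ (Fin N), g x = F t t' x)) := by
  constructor
  · intro h t' ht' t ht htt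
    obtain ⟨X, hX, hXeq⟩ := h t' ht' t ht htt
    refine ⟨fun p => X.mulVec p, fun p hp => stoch_mulVec_mem hX hp, ?_, ?_⟩
    · intro p _ q _ l _
      simp [Matrix.mulVec_add, Matrix.mulVec_smul]
    · rintro x ⟨p, hp, rfl⟩
      simp only
      rw [hFdecomp t' ht' t ht htt p hp, hXeq, ← Matrix.mulVec_mulVec]
  · intro h t' ht' t ht htt
    obtain ⟨g, hgmap, hgconv, hgF⟩ := h t' ht' t ht htt
    set e : Fin N → Fin N → ℝ := fun j => Pi.single j 1 with he
    have hemem : ∀ j, e j ∈ stdSimplex ℝ (Fin N) := fun j =>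
      ⟨fun i => by by_cases hij : i = j <;> simp [he, Pi.single_apply, hij],
       by simp [he, Pi.single_apply]⟩
    set X : Matrix (Fin N) (Fin N) ℝ := fun i j => g (e j) i with hXdef
    have hrep : ∀ p ∈ stdSimplex ℝ (Fin N), g p = X.mulVec p := by
      intro p hp
      have hdecomp : p = ∑ j, p j • e j := by
        funext i
        simp [he, Pi.single_apply, Finset.sum_apply]
      calc g p = g (∑ j, p j • e j) := by rw [← hdecomp]
        _ = ∑ j, p j • g (e j) :=
            g_convex_sum g hgconv Finset.univ p e (fun i _ => hp.1 i) hp.2 (fun i _ => hemem i)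
        _ = X.mulVec p := by
            funext i
            simp [hXdef, Matrix.mulVec, dotProduct, Finset.sum_apply, mul_comm]
    have hXstoch : ColStochastic X := by
      constructor
      · intro i j
        have hm := hgmap (e j) (hemem j)
        refine ⟨hm.1 i, ?_⟩
        calc g (e j) i ≤ ∑ k, g (e j) k :=
              Finset.single_le_sum (fun k _ => hm.1 k) (Finset.mem_univ i)
          _ = 1 := hm.2
      · intro j
        exact (hgmap (e j) (hemem j)).2
    refine ⟨X, hXstoch, ?_⟩
    have hcol : ∀ k, (Pm t).mulVec (e k) = (X * Pm t').mulVec (e k) := by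
      intro k
      rw [← Matrix.mulVec_mulVec]
      rw [← hrep _ (stoch_mulVec_mem (hstoch t' ht') (hemem k))]
      rw [hgF _ ⟨e k, hemem k, rfl⟩]
      rw [hFdecomp t' ht' t ht htt (e k) (hemem k)]
    ext i k
    have := congrFun (hcol k) i
    simpa [he, Matrix.mulVec_single] using this
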